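/- arXiv:2402.03975 — 2 statements merged into one kernel-verified Lean document; each statement's English description precedes it below -/
import Mathlib

section
/- Let G = ([n],E) be a strongly connected directed graph with m = |E| edges in which every vertex has an outgoing edge. Then the sets P^C (indexed by the directed cycles C of G) are pairwise disjoint, each P^C is an open convex cone in ℝ^m (closed under multiplication by positive scalars), and the complement ℝ^m ∖ U is contained in a finite union of affine hyperplanes; in particular ℝ^m ∖ U has Lebesgue measure zero. -/
open MeasureTheory

/-- The `k`-th edge of the closed walk determined by the list of vertices `c`
(from the `k`-th vertex to the next one, cyclically). -/
def cycleEdge {n : ℕ} (c : List (Fin n)) (k : Fin c.length) : Fin n × Fin n :=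
  (c.get k, c.get ⟨(k.1 + 1) % c.length, Nat.mod_lt _ (Nat.lt_of_le_of_lt (Nat.zero_le _) k.isLt)⟩)

/-- `C ⊆ E` is the edge set of a simple directed cycle of the graph `([n], E)`. -/
def IsCycle {n : ℕ} (E : Finset (Fin n × Fin n)) (C : Finset {e : Fin n × Fin n // e ∈ E}) :
    Prop :=
  ∃ (c : List (Fin n)) (h : ∀ k : Fin c.length, cycleEdge c k ∈ E),
    0 < c.length ∧ c.Nodup ∧
      C = Finset.image (fun k => (⟨cycleEdge c k, h k⟩ : {e : Fin n × Fin n // e ∈ E}))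
            Finset.univ

/-- Mean weight of a set of edges. -/
noncomputable def meanWeight {n : ℕ} {E : Finset (Fin n × Fin n)}
    (r : {e : Fin n × Fin n // e ∈ E} → ℝ) (C : Finset {e : Fin n × Fin n // e ∈ E}) : ℝ :=
  (∑ e ∈ C, r e) / C.card

/-- `C` is an optimal (minimum mean weight) cycle of the DMDP with weights `r`. -/
def IsOptCycle {n : ℕ} (E : Finset (Fin n × Fin n)) (r : {e : Fin n × Fin n // e ∈ E} → ℝ)
    (C : Finset {e : Fin n × Fin n // e ∈ E}) : Prop :=
  IsCycle E C ∧ ∀ C', IsCycle E C' → meanWeight r C ≤ meanWeight r C'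

/-- `P^C`: the set of weight vectors for which `C` is the unique optimal cycle. -/
def Pcell {n : ℕ} (E : Finset (Fin n × Fin n)) (C : Finset {e : Fin n × Fin n // e ∈ E}) :
    Set ({e : Fin n × Fin n // e ∈ E} → ℝ) :=
  {r | IsOptCycle E r C ∧ ∀ C', IsOptCycle E r C' → C' = C}

/-- `U := ∪_C P^C`. -/
def Ucell {n : ℕ} (E : Finset (Fin n × Fin n)) : Set ({e : Fin n × Fin n // e ∈ E} → ℝ) :=
  ⋃ C, Pcell E C

/-- The directed graph `([n], E)` is strongly connected. -/
def StronglyConnected {n : ℕ} (E : Finset (Fin n × Fin n)) : Prop :=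
  ∀ i j : Fin n, Relation.ReflTransGen (fun a b => (a, b) ∈ E) i j

section Aux

variable {n : ℕ} {E : Finset (Fin n × Fin n)}

lemma IsCycle.card_pos {C : Finset {e : Fin n × Fin n // e ∈ E}} (hC : IsCycle E C) :
    0 < C.card := by
  obtain ⟨c, h, hlen, -, rfl⟩ := hC
  rw [Finset.card_pos]
  exact ⟨_, Finset.mem_image.mpr ⟨⟨0, hlen⟩, Finset.mem_univ _, rfl⟩⟩

lemma meanWeight_add (r s : {e : Fin n × Fin n // e ∈ E} → ℝ)
    (C : Finset {e : Fin n × Fin n // e ∈ E}) :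
    meanWeight (r + s) C = meanWeight r C + meanWeight s C := by
  simp only [meanWeight, Pi.add_apply, Finset.sum_add_distrib, add_div]

lemma meanWeight_smul (t : ℝ) (r : {e : Fin n × Fin n // e ∈ E} → ℝ)
    (C : Finset {e : Fin n × Fin n // e ∈ E}) :
    meanWeight (t • r) C = t * meanWeight r C := by
  simp only [meanWeight, Pi.smul_apply, smul_eq_mul, ← Finset.mul_sum, mul_div_assoc]

lemma continuous_meanWeight (C : Finset {e : Fin n × Fin n // e ∈ E}) :
    Continuous fun r : {e : Fin n × Fin n // e ∈ E} → ℝ => meanWeight r C :=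
  (continuous_finset_sum _ fun e _ => continuous_apply e).div_const _

lemma Pcell_eq {C : Finset {e : Fin n × Fin n // e ∈ E}} (hC : IsCycle E C) :
    Pcell E C = ⋂ D : {D : Finset {e : Fin n × Fin n // e ∈ E} // IsCycle E D ∧ D ≠ C},
      {r | meanWeight r C < meanWeight r D.1} := by
  ext r
  simp only [Pcell, Set.mem_setOf_eq, Set.mem_iInter, Subtype.forall]
  constructor
  · rintro ⟨⟨-, hmin⟩, huniq⟩ D ⟨hD, hDne⟩
    rcases lt_or_eq_of_le (hmin D hD) with h | h
    · exact h
    · exact absurd (huniq D ⟨hD, fun D' hD' => h ▸ hmin D' hD'⟩) hDne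
  · intro h
    have hopt : IsOptCycle E r C := by
      refine ⟨hC, fun D hD => ?_⟩
      by_cases hDC : D = C
      · exact le_of_eq (hDC ▸ rfl)
      · exact le_of_lt (h D ⟨hD, hDC⟩)
    refine ⟨hopt, fun D hD => ?_⟩
    by_contra hDC
    exact absurd (hD.2 C hC) (not_le.mpr (h D ⟨hD.1, hDC⟩))

lemma exists_cycle (hn : 0 < n) (hout : ∀ i : Fin n, ∃ j : Fin n, (i, j) ∈ E) :
    ∃ C : Finset {e : Fin n × Fin n // e ∈ E}, IsCycle E C := by
  classical
  choose f hf using hout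
  -- find a periodic point of f
  have hnotinj : ¬ Function.Injective (fun k : Fin (n + 1) => f^[k.1] ⟨0, hn⟩) := by
    intro h
    have := Fintype.card_le_of_injective _ h
    simp at this
  obtain ⟨i, j, hij, hne⟩ := Function.not_injective_iff.mp hnotinj
  -- wlog i < j
  have key : ∀ i j : Fin (n + 1), i.1 < j.1 → f^[i.1] ⟨0, hn⟩ = f^[j.1] ⟨0, hn⟩ →
      ∃ C : Finset {e : Fin n × Fin n // e ∈ E}, IsCycle E C := by
    clear hij hne i j
    intro i j hlt hij
    set x : Fin n := f^[i.1] ⟨0, hn⟩ with hx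
    have hper : Function.IsPeriodicPt f (j.1 - i.1) x := by
      show f^[j.1 - i.1] x = x
      rw [hx, ← Function.iterate_add_apply, Nat.sub_add_cancel (le_of_lt hlt)]
      exact hij.symm
    set p : ℕ := Function.minimalPeriod f x with hpdef
    have hp : 0 < p := hper.minimalPeriod_pos (by omega)
    have hperiod : f^[p] x = x := Function.isPeriodicPt_minimalPeriod f x
    set c : List (Fin n) := (List.range p).map (fun k => f^[k] x) with hc
    have hlen : c.length = p := by simp [hc]
    have hget : ∀ m (hm : m < c.length), c.get ⟨m, hm⟩ = f^[m] x := by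
      intro m hm; simp [hc]
    have hedge : ∀ k : Fin c.length, cycleEdge c k = (f^[k.1] x, f (f^[k.1] x)) := by
      intro k
      have hk : k.1 < p := hlen ▸ k.isLt
      unfold cycleEdge
      rw [hget k.1 k.isLt, hget _ _]
      congr 1
      have hsucc : f (f^[k.1] x) = f^[k.1 + 1] x := (Function.iterate_succ_apply' f k.1 x).symm
      rw [hsucc]
      rcases lt_or_eq_of_le (Nat.succ_le_of_lt hk) with h | h
      · have hmod : (k.1 + 1) % c.length = k.1 + 1 :=
          Nat.mod_eq_of_lt (by omega)
        rw [hmod]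
      · have hmod : (k.1 + 1) % c.length = 0 := by
          have h' : k.1 + 1 = c.length := by omega
          rw [h', Nat.mod_self]
        rw [hmod, Function.iterate_zero_apply, show k.1 + 1 = p from h, hperiod]
    have hmem : ∀ k : Fin c.length, cycleEdge c k ∈ E := by
      intro k; rw [hedge k]; exact hf _
    refine ⟨Finset.image (fun k => (⟨cycleEdge c k, hmem k⟩ :
      {e : Fin n × Fin n // e ∈ E})) Finset.univ, c, hmem, ?_, ?_, rfl⟩
    · omega
    · rw [hc]
      refine List.Nodup.map_on ?_ (List.nodup_range (n := p))
      intro a ha b hb hab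
      exact Function.iterate_injOn_Iio_minimalPeriod
        (Set.mem_Iio.mpr (List.mem_range.mp ha)) (Set.mem_Iio.mpr (List.mem_range.mp hb)) hab
  rcases Ne.lt_or_gt (fun h => hne (by exact_mod_cast h)) with h | h
  · exact key i j h hij
  · exact key j i h hij.symm

/-- measure zero of a hyperplane -/
lemma hyperplane_null {ι : Type*} [Fintype ι] (a : ι → ℝ) (ha : a ≠ 0) (b : ℝ) :
    volume {x : ι → ℝ | ∑ e, a e * x e = b} = 0 := by
  classical
  obtain ⟨e₀, he₀⟩ := Function.ne_iff.mp ha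
  have he₀' : a e₀ ≠ 0 := by simpa using he₀
  let L : (ι → ℝ) →ₗ[ℝ] ℝ :=
    { toFun := fun x => ∑ e, a e * x e
      map_add' := by
        intro x y
        simp [mul_add, Finset.sum_add_distrib]
      map_smul' := by
        intro t x
        simp [Finset.mul_sum, mul_comm, mul_left_comm] }
  have hLapp : ∀ x, L x = ∑ e, a e * x e := fun _ => rfl
  have hLsingle : ∀ (e : ι) (t : ℝ), L (Pi.single e t) = a e * t := by
    intro e t
    rw [hLapp, Finset.sum_eq_single e]
    · simp
    · intro e' _ hne; simp [Pi.single_eq_of_ne hne]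
    · intro h; exact absurd (Finset.mem_univ e) h
  have hLne : L ≠ 0 := by
    intro h0
    have h1 := hLsingle e₀ 1
    rw [h0] at h1
    simp at h1
    exact he₀' h1.symm
  have hLx₀ : L ((Pi.single e₀ (b / a e₀) : ι → ℝ)) = b := by
    rw [hLsingle, mul_div_cancel₀ _ he₀']
  have hset : {x : ι → ℝ | ∑ e, a e * x e = b} =
      (AffineSubspace.mk' ((Pi.single e₀ (b / a e₀) : ι → ℝ)) (LinearMap.ker L) : Set (ι → ℝ)) := by
    ext x
    rw [Set.mem_setOf_eq, SetLike.mem_coe, AffineSubspace.mem_mk',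
      LinearMap.mem_ker]
    have hL : L (x -ᵥ (Pi.single e₀ (b / a e₀) : ι → ℝ)) = L x - b := by
      rw [vsub_eq_sub, map_sub, hLx₀]
    rw [hL, sub_eq_zero, hLapp]
  rw [hset]
  refine Measure.addHaar_affineSubspace volume _ ?_
  intro htop
  have hdir : (AffineSubspace.mk' ((Pi.single e₀ (b / a e₀) : ι → ℝ)) (LinearMap.ker L)).direction = ⊤ := by
    rw [htop, AffineSubspace.direction_top]
  rw [AffineSubspace.direction_mk'] at hdir
  exact hLne (LinearMap.ker_eq_top.mp hdir)

end Aux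

theorem stmt0 (n : ℕ) (hn : 0 < n) (E : Finset (Fin n × Fin n))
    (hsc : StronglyConnected E) (hout : ∀ i : Fin n, ∃ j : Fin n, (i, j) ∈ E) :
    (∀ C C' : Finset {e : Fin n × Fin n // e ∈ E}, IsCycle E C → IsCycle E C' → C ≠ C' →
        Pcell E C ∩ Pcell E C' = ∅) ∧
    (∀ C : Finset {e : Fin n × Fin n // e ∈ E}, IsCycle E C →
        IsOpen (Pcell E C) ∧ Convex ℝ (Pcell E C) ∧
          ∀ r ∈ Pcell E C, ∀ t : ℝ, 0 < t → t • r ∈ Pcell E C) ∧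
    (∃ (k : ℕ) (a : Fin k → {e : Fin n × Fin n // e ∈ E} → ℝ) (b : Fin k → ℝ),
        (∀ i, a i ≠ 0) ∧
        (Ucell E)ᶜ ⊆ ⋃ i, {x : {e : Fin n × Fin n // e ∈ E} → ℝ | ∑ e, a i e * x e = b i}) ∧
    volume (Ucell E)ᶜ = 0 := by
  classical
  -- edge type is nonempty
  obtain ⟨j₀, hj₀⟩ := hout ⟨0, hn⟩
  have hEne : Nonempty {e : Fin n × Fin n // e ∈ E} := ⟨⟨_, hj₀⟩⟩
  -- disjointness
  have hdisj : ∀ C C' : Finset {e : Fin n × Fin n // e ∈ E}, IsCycle E C → IsCycle E C' →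
      C ≠ C' → Pcell E C ∩ Pcell E C' = ∅ := by
    intro C C' _ _ hne
    rw [Set.eq_empty_iff_forall_notMem]
    rintro r ⟨⟨hoptC, -⟩, ⟨-, huniq'⟩⟩
    exact hne (huniq' C hoptC)
  -- cell properties
  have hcells : ∀ C : Finset {e : Fin n × Fin n // e ∈ E}, IsCycle E C →
      IsOpen (Pcell E C) ∧ Convex ℝ (Pcell E C) ∧
        ∀ r ∈ Pcell E C, ∀ t : ℝ, 0 < t → t • r ∈ Pcell E C := by
    intro C hC
    rw [Pcell_eq hC]
    refine ⟨isOpen_iInter_of_finite fun D =>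
      isOpen_lt (continuous_meanWeight C) (continuous_meanWeight D.1), ?_, ?_⟩
    · refine convex_iInter fun D => ?_
      have : {r : {e : Fin n × Fin n // e ∈ E} → ℝ | meanWeight r C < meanWeight r D.1}
          = {r | (fun r => meanWeight r C - meanWeight r D.1) r < 0} := by
        ext r; simp [sub_neg]
      rw [this]
      refine convex_halfSpace_lt ⟨?_, ?_⟩ 0
      · intro r s; rw [meanWeight_add, meanWeight_add]; ring
      · intro t r
        show meanWeight (t • r) C - meanWeight (t • r) _ = t • (meanWeight r C - meanWeight r _)
        rw [meanWeight_smul, meanWeight_smul, smul_eq_mul]; ring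
    · intro r hr t ht
      simp only [Set.mem_iInter, Set.mem_setOf_eq] at hr ⊢
      intro D
      rw [meanWeight_smul, meanWeight_smul]
      exact mul_lt_mul_of_pos_left (hr D) ht
  -- hyperplanes
  set ι := {e : Fin n × Fin n // e ∈ E}
  set P := Finset ι × Finset ι
  set eqv : Fin (Fintype.card P) ≃ P := (Fintype.equivFin P).symm with heqv
  set coef : Finset ι → ι → ℝ := fun C e => if e ∈ C then ((C.card : ℝ))⁻¹ else 0 with hcoef
  have hsum_coef : ∀ (C : Finset ι) (x : ι → ℝ), ∑ e, coef C e * x e = meanWeight x C := by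
    intro C x
    rw [meanWeight, eq_comm]
    rw [show (∑ e, coef C e * x e) = ∑ e, if e ∈ C then (C.card : ℝ)⁻¹ * x e else 0 by
      refine Finset.sum_congr rfl fun e _ => ?_
      by_cases h : e ∈ C <;> simp [hcoef, h]]
    rw [← Finset.sum_filter, Finset.filter_univ_mem, ← Finset.mul_sum, inv_mul_eq_div]
  set A : P → ι → ℝ := fun p =>
    if IsCycle E p.1 ∧ IsCycle E p.2 ∧ p.1 ≠ p.2 then
      (fun e => coef p.1 e - coef p.2 e) else (fun _ => 1) with hA
  have hAne : ∀ p : P, A p ≠ 0 := by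
    intro p
    by_cases hp : IsCycle E p.1 ∧ IsCycle E p.2 ∧ p.1 ≠ p.2
    · have hAp : A p = fun e => coef p.1 e - coef p.2 e := by
        simp only [hA]; rw [if_pos hp]
      rw [hAp]
      obtain ⟨hp1, hp2, hpne⟩ := hp
      have : ∃ e, ¬ (e ∈ p.1 ↔ e ∈ p.2) := by
        by_contra h
        push_neg at h
        exact hpne (Finset.ext fun e => h e)
      obtain ⟨e, he⟩ := this
      intro h0
      have he0 : coef p.1 e - coef p.2 e = 0 := congrFun h0 e
      rcases Classical.em (e ∈ p.1) with h1 | h1 <;> rcases Classical.em (e ∈ p.2) with h2 | h2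
      · exact he ⟨fun _ => h2, fun _ => h1⟩
      · rw [hcoef] at he0
        simp only [h1, h2, if_true, if_false, sub_zero] at he0
        exact (inv_ne_zero (Nat.cast_ne_zero.mpr hp1.card_pos.ne')) he0
      · rw [hcoef] at he0
        simp only [h1, h2, if_true, if_false, zero_sub, neg_eq_zero] at he0
        exact (inv_ne_zero (Nat.cast_ne_zero.mpr hp2.card_pos.ne')) he0
      · exact he ⟨fun h => absurd h h1, fun h => absurd h h2⟩
    · have hAp : A p = fun _ => 1 := by
        simp only [hA]; rw [if_neg hp]
      rw [hAp]
      intro h0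
      obtain ⟨e⟩ := hEne
      have : (1 : ℝ) = 0 := congrFun h0 e
      norm_num at this
  set a : Fin (Fintype.card P) → ι → ℝ := fun i => A (eqv i) with ha
  set b : Fin (Fintype.card P) → ℝ := fun _ => 0 with hb
  have hcover : (Ucell E)ᶜ ⊆ ⋃ i, {x : ι → ℝ | ∑ e, a i e * x e = b i} := by
    intro r hr
    have hrU : ∀ C, r ∉ Pcell E C := by
      intro C hC
      exact hr (Set.mem_iUnion.mpr ⟨C, hC⟩)
    -- choose an optimal cycle
    set S : Finset (Finset ι) := Finset.univ.filter (fun C => IsCycle E C) with hS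
    have hSne : S.Nonempty := by
      obtain ⟨C, hC⟩ := exists_cycle hn hout
      exact ⟨C, Finset.mem_filter.mpr ⟨Finset.mem_univ _, hC⟩⟩
    obtain ⟨C, hCS, hmin⟩ := Finset.exists_min_image S (meanWeight r) hSne
    have hCcyc : IsCycle E C := (Finset.mem_filter.mp hCS).2
    have hopt : IsOptCycle E r C :=
      ⟨hCcyc, fun D hD => hmin D (Finset.mem_filter.mpr ⟨Finset.mem_univ _, hD⟩)⟩
    have := hrU C
    rw [Pcell] at this
    simp only [Set.mem_setOf_eq, not_and, not_forall] at this
    obtain ⟨D, hDopt, hDne⟩ := this hopt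
    have hmeq : meanWeight r C = meanWeight r D :=
      le_antisymm (hopt.2 D hDopt.1) (hDopt.2 C hCcyc)
    refine Set.mem_iUnion.mpr ⟨eqv.symm (C, D), ?_⟩
    have heq : eqv (eqv.symm (C, D)) = (C, D) := Equiv.apply_symm_apply _ _
    have hcond : IsCycle E C ∧ IsCycle E D ∧ C ≠ D := ⟨hCcyc, hDopt.1, fun h => hDne h.symm⟩
    show ∑ e, a (eqv.symm (C, D)) e * r e = b (eqv.symm (C, D))
    simp only [ha, hb]
    rw [heq]
    have hACD : A (C, D) = fun e => coef C e - coef D e := by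
      simp only [hA]; exact if_pos hcond
    rw [hACD]
    simp only [sub_mul, Finset.sum_sub_distrib]
    rw [hsum_coef, hsum_coef, hmeq, sub_self]
  refine ⟨hdisj, hcells, ⟨Fintype.card P, a, b, fun i => hAne (eqv i), hcover⟩, ?_⟩
  refine measure_mono_null hcover (measure_iUnion_null fun i => ?_)
  exact hyperplane_null (a i) (hAne (eqv i)) (b i)
end

section
/- In the random model, for every α > 0, the probability that there exists an edge (i,j) ∈ E with Y_{ij}(r) ≤ r_{ij} ≤ Y_{ij}(r) + α (the inequalities interpreted in the extended reals) is at most α·m·φ. -/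
open MeasureTheory

/-- The threshold `Y_e(r)`: the infimum (in the extended reals) of the values `x` such that
some optimal cycle of the DMDP with weights `(x, r₋ₑ)` avoids the edge `e`. -/
noncomputable def Yedge {n : ℕ} (E : Finset (Fin n × Fin n))
    (e : {e : Fin n × Fin n // e ∈ E}) (r : {e : Fin n × Fin n // e ∈ E} → ℝ) : EReal :=
  sInf {x : EReal | ∃ x' : ℝ, x = (x' : EReal) ∧
    ∃ C : Finset {e : Fin n × Fin n // e ∈ E},
      IsOptCycle E (Function.update r e x') C ∧ e ∉ C}


section Aux

variable {n : ℕ} {E : Finset (Fin n × Fin n)}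

lemma meanWeight_update_eq {r : {e : Fin n × Fin n // e ∈ E} → ℝ}
    {e : {e : Fin n × Fin n // e ∈ E}} {x : ℝ} {C : Finset {e : Fin n × Fin n // e ∈ E}}
    (he : e ∉ C) :
    meanWeight (Function.update r e x) C = meanWeight r C := by
  unfold meanWeight
  congr 1
  refine Finset.sum_congr rfl fun e' he' => Function.update_of_ne ?_ _ _
  rintro rfl; exact he he'

lemma meanWeight_mono {r r' : {e : Fin n × Fin n // e ∈ E} → ℝ}
    (h : ∀ e, r e ≤ r' e) (C : Finset {e : Fin n × Fin n // e ∈ E}) :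
    meanWeight r C ≤ meanWeight r' C := by
  unfold meanWeight
  exact div_le_div_of_nonneg_right (Finset.sum_le_sum fun i _ => h i) (by positivity)

lemma isOptCycle_update_mono {r : {e : Fin n × Fin n // e ∈ E} → ℝ}
    {e : {e : Fin n × Fin n // e ∈ E}} {x x' : ℝ} (hxx : x ≤ x')
    {C : Finset {e : Fin n × Fin n // e ∈ E}}
    (h : IsOptCycle E (Function.update r e x) C) (he : e ∉ C) :
    IsOptCycle E (Function.update r e x') C := by
  refine ⟨h.1, fun C' hC' => ?_⟩
  rw [meanWeight_update_eq he]
  have h1 := h.2 C' hC'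
  rw [meanWeight_update_eq he] at h1
  refine h1.trans (meanWeight_mono (fun e' => ?_) C')
  rcases eq_or_ne e' e with rfl | hne
  · simp [hxx]
  · simp [Function.update_of_ne hne]

lemma measurableSet_optAvoid (e : {e : Fin n × Fin n // e ∈ E}) (q : ℝ) :
    MeasurableSet {r : {e : Fin n × Fin n // e ∈ E} → ℝ |
      ∃ C, IsOptCycle E (Function.update r e q) C ∧ e ∉ C} := by
  have hmw : ∀ C' : Finset {e : Fin n × Fin n // e ∈ E},
      Measurable fun r : {e : Fin n × Fin n // e ∈ E} → ℝ =>
        meanWeight (Function.update r e q) C' := by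
    intro C'
    unfold meanWeight
    apply Measurable.div_const
    apply Finset.measurable_sum
    intro e' _
    simp only [Function.update_apply]
    by_cases h : e' = e
    · simp [h]
    · simpa [h] using measurable_pi_apply e'
  have hrw : {r : {e : Fin n × Fin n // e ∈ E} → ℝ |
      ∃ C, IsOptCycle E (Function.update r e q) C ∧ e ∉ C} =
      ⋃ C : Finset {e : Fin n × Fin n // e ∈ E},
        {r | IsOptCycle E (Function.update r e q) C ∧ e ∉ C} := by
    ext r; simp
  rw [hrw]
  refine MeasurableSet.iUnion fun C => ?_
  by_cases heC : e ∉ C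
  swap
  · have : {r : {e : Fin n × Fin n // e ∈ E} → ℝ |
        IsOptCycle E (Function.update r e q) C ∧ e ∉ C} = ∅ := by
      ext r; simp [heC]
    simp [this]
  by_cases hC : IsCycle E C
  swap
  · have : {r : {e : Fin n × Fin n // e ∈ E} → ℝ |
        IsOptCycle E (Function.update r e q) C ∧ e ∉ C} = ∅ := by
      ext r; simp [IsOptCycle, hC]
    simp [this]
  have hrw2 : {r : {e : Fin n × Fin n // e ∈ E} → ℝ |
      IsOptCycle E (Function.update r e q) C ∧ e ∉ C} =
      ⋂ C' : Finset {e : Fin n × Fin n // e ∈ E},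
        {r | IsCycle E C' → meanWeight (Function.update r e q) C ≤
          meanWeight (Function.update r e q) C'} := by
    ext r
    simp only [Set.mem_iInter, Set.mem_setOf_eq, IsOptCycle]
    tauto
  rw [hrw2]
  refine MeasurableSet.iInter fun C' => ?_
  by_cases hC' : IsCycle E C'
  · simp only [hC', forall_true_left]
    exact measurableSet_le (hmw C) (hmw C')
  · simp [hC']

lemma measurable_Yedge (e : {e : Fin n × Fin n // e ∈ E}) :
    Measurable (Yedge E e) := by
  apply measurable_of_Iio
  intro a
  have hrw : Yedge E e ⁻¹' Set.Iio a =
      ⋃ (q : ℚ) (_ : (((q : ℝ) : EReal)) < a),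
        {r : {e : Fin n × Fin n // e ∈ E} → ℝ |
          ∃ C, IsOptCycle E (Function.update r e (q : ℝ)) C ∧ e ∉ C} := by
    ext r
    simp only [Set.mem_preimage, Set.mem_Iio, Set.mem_iUnion, Set.mem_setOf_eq]
    constructor
    · intro h
      simp only [Yedge] at h
      obtain ⟨x, hxS, hxa⟩ := sInf_lt_iff.1 h
      obtain ⟨x', rfl, C, hC, heC⟩ := hxS
      obtain ⟨q, hq1, hq2⟩ : ∃ q : ℚ, x' ≤ (q : ℝ) ∧ (((q : ℝ) : EReal)) < a := by
        induction a using EReal.rec with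
        | bot => exact absurd hxa (by simp)
        | coe b =>
            obtain ⟨q, hq1, hq2⟩ := exists_rat_btwn (EReal.coe_lt_coe_iff.1 hxa)
            exact ⟨q, hq1.le, EReal.coe_lt_coe_iff.2 hq2⟩
        | top =>
            obtain ⟨q, hq⟩ := exists_rat_gt x'
            exact ⟨q, hq.le, EReal.coe_lt_top _⟩
      exact ⟨q, hq2, C, isOptCycle_update_mono hq1 hC heC, heC⟩
    · rintro ⟨q, hq, C, hC, heC⟩
      refine lt_of_le_of_lt ?_ hq
      exact sInf_le ⟨(q : ℝ), rfl, C, hC, heC⟩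
  rw [hrw]
  exact MeasurableSet.iUnion fun q => MeasurableSet.iUnion fun _ =>
    measurableSet_optAvoid e _

lemma Yedge_update (e : {e : Fin n × Fin n // e ∈ E})
    (r : {e : Fin n × Fin n // e ∈ E} → ℝ) (t : ℝ) :
    Yedge E e (Function.update r e t) = Yedge E e r := by
  simp only [Yedge, Function.update_idem]

lemma continuous_addConstEReal (c : ℝ) :
    Continuous (fun y : EReal => y + (c : EReal)) := by
  rw [continuous_iff_continuousAt]
  intro y
  have h := EReal.continuousAt_add (p := (y, (c : EReal)))
    (Or.inr (by simp)) (Or.inr (by simp))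
  have h2 : ContinuousAt (fun y : EReal => ((y, (c : EReal)) : EReal × EReal)) y :=
    continuousAt_id.prodMk continuousAt_const
  exact ContinuousAt.comp (g := fun p : EReal × EReal => p.1 + p.2)
    (f := fun y : EReal => ((y, (c : EReal)) : EReal × EReal)) (x := y) h h2

open ProbabilityTheory in
lemma edge_bound {Ω : Type*} [MeasurableSpace Ω] (μ : Measure Ω) [IsProbabilityMeasure μ]
    (X : Ω → {e : Fin n × Fin n // e ∈ E} → ℝ)
    (hmeas : ∀ e, Measurable fun ω => X ω e)
    (hindep : iIndepFun (fun e ω => X ω e) μ)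
    (f : {e : Fin n × Fin n // e ∈ E} → ℝ → ENNReal)
    (hdens : ∀ e, Measure.map (fun ω => X ω e) μ = volume.withDensity (f e))
    (φ : ℝ) (hφ : 0 < φ)
    (hbound : ∀ e y, f e y ≤ ENNReal.ofReal φ)
    (α : ℝ) (hα : 0 < α) (e : {e : Fin n × Fin n // e ∈ E}) :
    μ {ω | Yedge E e (X ω) ≤ (X ω e : EReal) ∧
        (X ω e : EReal) ≤ Yedge E e (X ω) + (α : EReal)} ≤ ENNReal.ofReal (α * φ) := by
  classical
  set S : Finset {e : Fin n × Fin n // e ∈ E} := Finset.univ.erase e with hSdef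
  have hextm : Measurable (fun (p : S → ℝ) i =>
      if h : i ∈ S then p ⟨i, h⟩ else 0 : (S → ℝ) → ({e : Fin n × Fin n // e ∈ E} → ℝ)) := by
    apply measurable_pi_lambda
    intro i
    by_cases h : i ∈ S
    · simpa [h] using measurable_pi_apply (⟨i, h⟩ : S)
    · simp only [dif_neg h]
      exact measurable_const
  have hG : Measurable (fun p : S → ℝ =>
      Yedge E e (fun i => if h : i ∈ S then p ⟨i, h⟩ else 0)) :=
    (measurable_Yedge e).comp hextm
  have hid : ∀ r : {e : Fin n × Fin n // e ∈ E} → ℝ,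
      Yedge E e (fun i => if h : i ∈ S then (fun j : S => r j) ⟨i, h⟩ else 0) = Yedge E e r := by
    intro r
    have hext : (fun i => if h : i ∈ S then (fun j : S => r j) ⟨i, h⟩ else 0) =
        Function.update r e 0 := by
      funext i
      by_cases h : i ∈ S
      · have hne : i ≠ e := Finset.ne_of_mem_erase h
        simp [h, Function.update_of_ne hne]
      · have : i = e := by
          by_contra hne
          exact h (Finset.mem_erase.2 ⟨hne, Finset.mem_univ i⟩)
        subst this
        simp [h]
    rw [hext]
    exact Yedge_update e r 0
  have hRestm : Measurable (fun ω (i : S) => X ω i) :=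
    measurable_pi_lambda _ fun i => hmeas i
  have hXem : Measurable (fun ω => X ω e) := hmeas e
  have hdisj : Disjoint S ({e} : Finset {e : Fin n × Fin n // e ∈ E}) :=
    Finset.disjoint_singleton_right.2 (Finset.notMem_erase e _)
  have hi0 := hindep.indepFun_finset S {e} hdisj hmeas
  have hi : IndepFun (fun ω (i : S) => X ω i) (fun ω => X ω e) μ := by
    have h2 := hi0.comp (φ := id)
      (ψ := fun q : ({e} : Finset {e : Fin n × Fin n // e ∈ E}) → ℝ =>
        q ⟨e, Finset.mem_singleton_self e⟩) measurable_id
        (measurable_pi_apply (⟨e, Finset.mem_singleton_self e⟩ : ({e} : Finset {e : Fin n × Fin n // e ∈ E})) :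
          Measurable fun q : ({e} : Finset {e : Fin n × Fin n // e ∈ E}) → ℝ => q ⟨e, Finset.mem_singleton_self e⟩)
    exact h2
  haveI : IsProbabilityMeasure (μ.map (fun ω (i : S) => X ω i)) :=
    Measure.isProbabilityMeasure_map hRestm.aemeasurable
  haveI : IsProbabilityMeasure (μ.map (fun ω => X ω e)) :=
    Measure.isProbabilityMeasure_map hXem.aemeasurable
  have hmap : μ.map (fun ω => ((fun (i : S) => X ω i), X ω e)) =
      (μ.map (fun ω (i : S) => X ω i)).prod (μ.map (fun ω => X ω e)) :=
    (indepFun_iff_map_prod_eq_prod_map_map hRestm.aemeasurable hXem.aemeasurable).1 hi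
  set T : Set ((S → ℝ) × ℝ) :=
    {z | Yedge E e (fun i => if h : i ∈ S then z.1 ⟨i, h⟩ else 0) ≤ (z.2 : EReal) ∧
      (z.2 : EReal) ≤ Yedge E e (fun i => if h : i ∈ S then z.1 ⟨i, h⟩ else 0) + (α : EReal)}
    with hTdef
  have hT : MeasurableSet T := by
    rw [hTdef, Set.setOf_and]
    exact (measurableSet_le (hG.comp measurable_fst)
        (measurable_coe_real_ereal.comp measurable_snd)).inter
      (measurableSet_le (measurable_coe_real_ereal.comp measurable_snd)
        (((continuous_addConstEReal α).measurable.comp hG).comp measurable_fst))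
  have hEvent : {ω | Yedge E e (X ω) ≤ (X ω e : EReal) ∧
      (X ω e : EReal) ≤ Yedge E e (X ω) + (α : EReal)} =
      (fun ω => ((fun (i : S) => X ω i), X ω e)) ⁻¹' T := by
    ext ω
    simp only [hTdef, Set.mem_preimage, Set.mem_setOf_eq, hid (X ω)]
  have hsec : ∀ p : S → ℝ,
      (μ.map (fun ω => X ω e)) {x : ℝ |
        Yedge E e (fun i => if h : i ∈ S then p ⟨i, h⟩ else 0) ≤ (x : EReal) ∧
        (x : EReal) ≤ Yedge E e (fun i => if h : i ∈ S then p ⟨i, h⟩ else 0) + (α : EReal)} ≤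
        ENNReal.ofReal (α * φ) := by
    intro p
    rw [hdens e]
    set v : EReal := Yedge E e (fun i => if h : i ∈ S then p ⟨i, h⟩ else 0) with hv
    clear_value v
    induction v using EReal.rec with
    | bot =>
        have hempty : {x : ℝ | (⊥ : EReal) ≤ (x : EReal) ∧
            (x : EReal) ≤ (⊥ : EReal) + (α : EReal)} = ∅ := by
          ext x
          simp only [Set.mem_setOf_eq, Set.mem_empty_iff_false, iff_false, not_and]
          intro _
          rw [EReal.bot_add]
          simp
        rw [hempty]
        simp
    | top =>
        have hempty : {x : ℝ | (⊤ : EReal) ≤ (x : EReal) ∧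
            (x : EReal) ≤ (⊤ : EReal) + (α : EReal)} = ∅ := by
          ext x
          simp only [Set.mem_setOf_eq, Set.mem_empty_iff_false, iff_false, not_and]
          intro h
          exact absurd (top_le_iff.1 h) (EReal.coe_ne_top x)
        rw [hempty]
        simp
    | coe y =>
        have hset : {x : ℝ | ((y : ℝ) : EReal) ≤ (x : EReal) ∧
            (x : EReal) ≤ ((y : ℝ) : EReal) + (α : EReal)} = Set.Icc y (y + α) := by
          ext x
          simp only [Set.mem_setOf_eq, Set.mem_Icc, ← EReal.coe_add,
            EReal.coe_le_coe_iff]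
        rw [hset, withDensity_apply _ measurableSet_Icc]
        calc ∫⁻ x in Set.Icc y (y + α), f e x
            ≤ ∫⁻ _ in Set.Icc y (y + α), ENNReal.ofReal φ :=
            lintegral_mono fun x => hbound e x
          _ = ENNReal.ofReal φ * volume (Set.Icc y (y + α)) := by
              rw [setLIntegral_const]
          _ = ENNReal.ofReal (α * φ) := by
              rw [Real.volume_Icc, show y + α - y = α by ring,
                ← ENNReal.ofReal_mul hφ.le, mul_comm]
  haveI : SFinite (μ.map (fun ω => X ω e)) := inferInstance
  calc μ {ω | Yedge E e (X ω) ≤ (X ω e : EReal) ∧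
        (X ω e : EReal) ≤ Yedge E e (X ω) + (α : EReal)}
      = (μ.map (fun ω => ((fun (i : S) => X ω i), X ω e))) T := by
        rw [hEvent, Measure.map_apply (hRestm.prodMk hXem) hT]
    _ = ((μ.map (fun ω (i : S) => X ω i)).prod (μ.map (fun ω => X ω e))) T := by rw [hmap]
    _ = ∫⁻ p, (μ.map (fun ω => X ω e)) (Prod.mk p ⁻¹' T)
          ∂(μ.map (fun ω (i : S) => X ω i)) := Measure.prod_apply hT
    _ ≤ ∫⁻ _, ENNReal.ofReal (α * φ) ∂(μ.map (fun ω (i : S) => X ω i)) :=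
        lintegral_mono fun p => hsec p
    _ = ENNReal.ofReal (α * φ) := by simp

end Aux

open ProbabilityTheory in
/-- In the random model, for every `α > 0`, the probability that some
edge weight `r_e` lands in `[Y_e(r), Y_e(r) + α]` is at most `α · m · φ`. -/
theorem stmt2 (n : ℕ) (hn : 0 < n) (E : Finset (Fin n × Fin n))
    (hsc : StronglyConnected E) (hout : ∀ i : Fin n, ∃ j : Fin n, (i, j) ∈ E)
    (φ : ℝ) (hφ : 0 < φ)
    (Ω : Type*) [MeasurableSpace Ω] (μ : Measure Ω) [IsProbabilityMeasure μ]
    (X : Ω → {e : Fin n × Fin n // e ∈ E} → ℝ)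
    (hmeas : ∀ e, Measurable fun ω => X ω e)
    (hindep : iIndepFun (fun e ω => X ω e) μ)
    (f : {e : Fin n × Fin n // e ∈ E} → ℝ → ENNReal)
    (hdens : ∀ e, Measure.map (fun ω => X ω e) μ = volume.withDensity (f e))
    (hbound : ∀ e y, f e y ≤ ENNReal.ofReal φ)
    (α : ℝ) (hα : 0 < α) :
    μ {ω | ∃ e : {e : Fin n × Fin n // e ∈ E},
        Yedge E e (X ω) ≤ (X ω e : EReal) ∧
        (X ω e : EReal) ≤ Yedge E e (X ω) + (α : EReal)} ≤
      ENNReal.ofReal (α * E.card * φ) := by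
  classical
  have hunion : {ω | ∃ e : {e : Fin n × Fin n // e ∈ E},
      Yedge E e (X ω) ≤ (X ω e : EReal) ∧
      (X ω e : EReal) ≤ Yedge E e (X ω) + (α : EReal)} =
      ⋃ e : {e : Fin n × Fin n // e ∈ E}, {ω | Yedge E e (X ω) ≤ (X ω e : EReal) ∧
        (X ω e : EReal) ≤ Yedge E e (X ω) + (α : EReal)} := by
    ext ω; simp
  calc μ {ω | ∃ e : {e : Fin n × Fin n // e ∈ E},
        Yedge E e (X ω) ≤ (X ω e : EReal) ∧
        (X ω e : EReal) ≤ Yedge E e (X ω) + (α : EReal)}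
      ≤ ∑' e : {e : Fin n × Fin n // e ∈ E},
          μ {ω | Yedge E e (X ω) ≤ (X ω e : EReal) ∧
            (X ω e : EReal) ≤ Yedge E e (X ω) + (α : EReal)} := by
        rw [hunion]; exact measure_iUnion_le _
    _ ≤ ∑' _ : {e : Fin n × Fin n // e ∈ E}, ENNReal.ofReal (α * φ) :=
        ENNReal.tsum_le_tsum fun e =>
          edge_bound μ X hmeas hindep f hdens φ hφ hbound α hα e
    _ = ENNReal.ofReal (α * E.card * φ) := by
        rw [tsum_fintype, Finset.sum_const, nsmul_eq_mul, Finset.card_univ, Fintype.card_coe,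
          ← ENNReal.ofReal_natCast E.card, ← ENNReal.ofReal_mul (by positivity)]
        congr 1
        ring
end
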